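/- In the algebra of sequents S, every element a satisfies contraction: if (Γ, A, A ⊢ B) ∈ a then (Γ, A ⊢ B) ∈ a. -/
import Mathlib


/-! Syntax of first-order deduction modulo: terms and formulas. -/

/-- First-order terms: variables, constants, and (applicative) application. -/
inductive Tm : Type
  | var : Nat → Tm
  | fn  : Nat → Tm
  | app : Tm → Tm → Tm

/-- Formulas of (many-sorted collapsed to one-sorted) predicate logic. -/
inductive Fm : Type
  | atom : Nat → Tm → Fm
  | top  : Fm
  | bot  : Fm
  | imp  : Fm → Fm → Fm
  | and  : Fm → Fm → Fm
  | or   : Fm → Fm → Fm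
  | all  : Nat → Fm → Fm
  | ex   : Nat → Fm → Fm

/-- Simultaneous substitution on terms. -/
def Tm.subst (σ : Nat → Tm) : Tm → Tm
  | var n => σ n
  | fn n => fn n
  | app t u => app (t.subst σ) (u.subst σ)

/-- Simultaneous substitution on formulas (binders block the substitution of
their variable). -/
def Fm.subst (σ : Nat → Tm) : Fm → Fm
  | atom p t => atom p (t.subst σ)
  | top => top
  | bot => bot
  | imp A B => imp (A.subst σ) (B.subst σ)
  | and A B => and (A.subst σ) (B.subst σ)
  | or A B => or (A.subst σ) (B.subst σ)
  | all x A => all x (A.subst (Function.update σ x (Tm.var x)))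
  | ex x A => ex x (A.subst (Function.update σ x (Tm.var x)))

/-- The substitution `(t/x)A`. -/
def subst1 (t : Tm) (x : Nat) (A : Fm) : Fm :=
  A.subst (Function.update Tm.var x t)

/-- Free variables of a term. -/
def Tm.fv : Tm → Set Nat
  | var n => {n}
  | fn _ => ∅
  | app t u => t.fv ∪ u.fv

/-- Free variables of a formula. -/
def Fm.fv : Fm → Set Nat
  | atom _ t => t.fv
  | top => ∅
  | bot => ∅
  | imp A B => A.fv ∪ B.fv
  | and A B => A.fv ∪ B.fv
  | or A B => A.fv ∪ B.fv
  | all x A => A.fv \ {x}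
  | ex x A => A.fv \ {x}

/-! Natural deduction modulo a congruence `R`, and its neutral / cut-free
proofs.  A sequent is a pair of a context (a list of formulas) and a formula;
`Γ, A` is represented by `Γ ++ [A]`. -/

mutual
  /-- `NCF R Γ A`: the sequent `Γ ⊢ A` has a neutral cut-free proof in natural
  deduction modulo `R`, i.e. a cut-free proof ending with the axiom rule or an
  elimination rule. -/
  inductive NCF (R : Fm → Fm → Prop) : List Fm → Fm → Prop
    | ax {Γ A B} : A ∈ Γ → R B A → NCF R Γ B
    | impE {Γ A B C} : NCF R Γ C → CF R Γ A → R C (Fm.imp A B) → NCF R Γ B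
    | andE1 {Γ A B C} : NCF R Γ C → R C (Fm.and A B) → NCF R Γ A
    | andE2 {Γ A B C} : NCF R Γ C → R C (Fm.and A B) → NCF R Γ B
    | orE {Γ A B C D} : NCF R Γ D → CF R (Γ ++ [A]) C → CF R (Γ ++ [B]) C →
        R D (Fm.or A B) → NCF R Γ C
    | botE {Γ A B} : NCF R Γ B → R B Fm.bot → NCF R Γ A
    | allE {Γ A B C x t} : NCF R Γ B → R B (Fm.all x A) → R C (subst1 t x A) →
        NCF R Γ C
    | exE {Γ A B C x} : NCF R Γ C → CF R (Γ ++ [A]) B → R C (Fm.ex x A) →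
        (∀ D ∈ Γ, x ∉ D.fv) → x ∉ B.fv → NCF R Γ B

  /-- `CF R Γ A`: the sequent `Γ ⊢ A` has a cut-free proof in natural deduction
  modulo `R`: it ends with the axiom rule, or with an introduction rule whose
  premises have cut-free proofs, or with an elimination rule whose major
  premise has a neutral cut-free proof and whose other premises have cut-free
  proofs. -/
  inductive CF (R : Fm → Fm → Prop) : List Fm → Fm → Prop
    | neutral {Γ A} : NCF R Γ A → CF R Γ A
    | topI {Γ A} : R A Fm.top → CF R Γ A
    | impI {Γ A B C} : CF R (Γ ++ [A]) B → R C (Fm.imp A B) → CF R Γ C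
    | andI {Γ A B C} : CF R Γ A → CF R Γ B → R C (Fm.and A B) → CF R Γ C
    | orI1 {Γ A B C} : CF R Γ A → R C (Fm.or A B) → CF R Γ C
    | orI2 {Γ A B C} : CF R Γ B → R C (Fm.or A B) → CF R Γ C
    | allI {Γ A B x} : CF R Γ A → R B (Fm.all x A) → (∀ D ∈ Γ, x ∉ D.fv) →
        CF R Γ B
    | exI {Γ A B C x t} : CF R Γ C → R C (subst1 t x A) → R B (Fm.ex x A) →
        CF R Γ B
end

/-- A sequent `Γ ⊢ A`. -/
abbrev Sequent : Type := List Fm × Fm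

/-! The operations of the algebra of sequents. -/

/-- `⊤̃`: sequents with a neutral cut-free proof or whose conclusion is
congruent to `⊤`. -/
def tTop (R : Fm → Fm → Prop) : Set Sequent :=
  {s | NCF R s.1 s.2 ∨ R s.2 Fm.top}

/-- `⊥̃`: sequents with a neutral cut-free proof. -/
def tBot (R : Fm → Fm → Prop) : Set Sequent :=
  {s | NCF R s.1 s.2}

/-- `a ∧̃ b`. -/
def tAnd (R : Fm → Fm → Prop) (a b : Set Sequent) : Set Sequent :=
  {s | NCF R s.1 s.2 ∨
    ∃ A B, R s.2 (Fm.and A B) ∧ (s.1, A) ∈ a ∧ (s.1, B) ∈ b}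

/-- `a ∨̃ b`. -/
def tOr (R : Fm → Fm → Prop) (a b : Set Sequent) : Set Sequent :=
  {s | NCF R s.1 s.2 ∨
    ∃ A B, R s.2 (Fm.or A B) ∧ ((s.1, A) ∈ a ∨ (s.1, B) ∈ b)}

/-- `a ⇒̃ b`. -/
def tImp (R : Fm → Fm → Prop) (a b : Set Sequent) : Set Sequent :=
  {s | NCF R s.1 s.2 ∨
    ∃ A B, R s.2 (Fm.imp A B) ∧
      ∀ Θ : List Fm, (s.1 ++ Θ, A) ∈ a → (s.1 ++ Θ, B) ∈ b}

/-- `∀̃ E`. -/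
def tAll (R : Fm → Fm → Prop) (E : Set (Set Sequent)) : Set Sequent :=
  {s | NCF R s.1 s.2 ∨
    ∃ x A, R s.2 (Fm.all x A) ∧ ∀ t : Tm, ∀ a ∈ E, (s.1, subst1 t x A) ∈ a}

/-- `∃̃ E`. -/
def tEx (R : Fm → Fm → Prop) (E : Set (Set Sequent)) : Set Sequent :=
  {s | NCF R s.1 s.2 ∨
    ∃ x A, R s.2 (Fm.ex x A) ∧ ∃ t : Tm, ∃ a ∈ E, (s.1, subst1 t x A) ∈ a}

/-- The algebra of sequents: `InS R a` means `a` belongs to the smallest set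
`S` of sets of sequents closed under `⊤̃`, `⊥̃`, `∧̃`, `∨̃`, `⇒̃`, `∀̃`, `∃̃` and
arbitrary intersections. -/
inductive InS (R : Fm → Fm → Prop) : Set Sequent → Prop
  | top : InS R (tTop R)
  | bot : InS R (tBot R)
  | and {a b} : InS R a → InS R b → InS R (tAnd R a b)
  | or {a b} : InS R a → InS R b → InS R (tOr R a b)
  | imp {a b} : InS R a → InS R b → InS R (tImp R a b)
  | all {E} : (∀ a ∈ E, InS R a) → InS R (tAll R E)
  | ex {E} : (∀ a ∈ E, InS R a) → InS R (tEx R E)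
  | inter {E} : (∀ a ∈ E, InS R a) → InS R (⋂₀ E)

private lemma mem_ext_snoc {Γ Δ : List Fm} (h : ∀ C, C ∈ Γ ↔ C ∈ Δ) (A : Fm) :
    ∀ C, C ∈ Γ ++ [A] ↔ C ∈ Δ ++ [A] := by
  intro C; simp only [List.mem_append]; rw [h C]

theorem NCF.ext {R : Fm → Fm → Prop} {Γ B} (h : NCF R Γ B) :
    ∀ Δ, (∀ C, C ∈ Γ ↔ C ∈ Δ) → NCF R Δ B := by
  refine NCF.rec (R := R)
    (motive_1 := fun Γ B _ => ∀ Δ, (∀ C, C ∈ Γ ↔ C ∈ Δ) → NCF R Δ B)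
    (motive_2 := fun Γ B _ => ∀ Δ, (∀ C, C ∈ Γ ↔ C ∈ Δ) → CF R Δ B)
    ?_ ?_ ?_ ?_ ?_ ?_ ?_ ?_ ?_ ?_ ?_ ?_ ?_ ?_ ?_ ?_ h
  · exact fun hmem hr Δ hΔ => .ax ((hΔ _).1 hmem) hr
  · exact fun _ _ hr ih1 ih2 Δ hΔ => .impE (ih1 Δ hΔ) (ih2 Δ hΔ) hr
  · exact fun _ hr ih Δ hΔ => .andE1 (ih Δ hΔ) hr
  · exact fun _ hr ih Δ hΔ => .andE2 (ih Δ hΔ) hr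
  · exact fun _ _ _ hr ihD ihA ihB Δ hΔ => .orE (ihD Δ hΔ)
      (ihA _ (mem_ext_snoc hΔ _)) (ihB _ (mem_ext_snoc hΔ _)) hr
  · exact fun _ hr ih Δ hΔ => .botE (ih Δ hΔ) hr
  · exact fun _ hr hs ih Δ hΔ => .allE (ih Δ hΔ) hr hs
  · exact fun _ _ hr hfv hnb ihC ihB Δ hΔ => .exE (ihC Δ hΔ)
      (ihB _ (mem_ext_snoc hΔ _)) hr (fun D hD => hfv D ((hΔ D).2 hD)) hnb
  · exact fun _ ih Δ hΔ => .neutral (ih Δ hΔ)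
  · exact fun hr Δ _ => .topI hr
  · exact fun _ hr ih Δ hΔ => .impI (ih _ (mem_ext_snoc hΔ _)) hr
  · exact fun _ _ hr ih1 ih2 Δ hΔ => .andI (ih1 Δ hΔ) (ih2 Δ hΔ) hr
  · exact fun _ hr ih Δ hΔ => .orI1 (ih Δ hΔ) hr
  · exact fun _ hr ih Δ hΔ => .orI2 (ih Δ hΔ) hr
  · exact fun _ hr hfv ih Δ hΔ => .allI (ih Δ hΔ) hr
      (fun D hD => hfv D ((hΔ D).2 hD))
  · exact fun _ hr1 hr2 ih Δ hΔ => .exI (ih Δ hΔ) hr1 hr2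

/-- Elements of the algebra of sequents depend on the context only through its
set of members. -/
theorem InS.ext {R : Fm → Fm → Prop} {a : Set Sequent} (ha : InS R a) :
    ∀ (Γ Δ : List Fm) (B : Fm), (∀ C, C ∈ Γ ↔ C ∈ Δ) →
      (Γ, B) ∈ a → (Δ, B) ∈ a := by
  induction ha with
  | top =>
    rintro Γ Δ B hΔ (h | h)
    · exact Or.inl (h.ext _ hΔ)
    · exact Or.inr h
  | bot =>
    intro Γ Δ B hΔ h
    exact h.ext _ hΔ
  | and ha hb iha ihb =>
    rintro Γ Δ B hΔ (h | ⟨A', B', hr, h1, h2⟩)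
    · exact Or.inl (h.ext _ hΔ)
    · exact Or.inr ⟨A', B', hr, iha _ _ _ hΔ h1, ihb _ _ _ hΔ h2⟩
  | or ha hb iha ihb =>
    rintro Γ Δ B hΔ (h | ⟨A', B', hr, h1 | h2⟩)
    · exact Or.inl (h.ext _ hΔ)
    · exact Or.inr ⟨A', B', hr, Or.inl (iha _ _ _ hΔ h1)⟩
    · exact Or.inr ⟨A', B', hr, Or.inr (ihb _ _ _ hΔ h2)⟩
  | imp ha hb iha ihb =>
    rintro Γ Δ B hΔ (h | ⟨A', B', hr, h1⟩)
    · exact Or.inl (h.ext _ hΔ)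
    · refine Or.inr ⟨A', B', hr, fun Θ hΘ => ?_⟩
      have hext : ∀ C, C ∈ Δ ++ Θ ↔ C ∈ Γ ++ Θ := by
        intro C; simp only [List.mem_append]; rw [hΔ C]
      exact ihb _ _ _ (fun C => (hext C).symm) (h1 Θ (iha _ _ _ hext hΘ))
  | all hE ihE =>
    rintro Γ Δ B hΔ (h | ⟨x, A', hr, h1⟩)
    · exact Or.inl (h.ext _ hΔ)
    · exact Or.inr ⟨x, A', hr, fun t b hb => ihE b hb _ _ _ hΔ (h1 t b hb)⟩
  | ex hE ihE =>
    rintro Γ Δ B hΔ (h | ⟨x, A', hr, t, b, hb, h1⟩)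
    · exact Or.inl (h.ext _ hΔ)
    · exact Or.inr ⟨x, A', hr, t, b, hb, ihE b hb _ _ _ hΔ h1⟩
  | inter hE ihE =>
    intro Γ Δ B hΔ h b hb
    exact ihE b hb _ _ _ hΔ (h b hb)

/-- Every element of the algebra of sequents admits contraction: if
`(Γ, A, A ⊢ B)` belongs to `a ∈ S` then so does `(Γ, A ⊢ B)`.
(Third point of Proposition `prop:basics`.) -/
theorem InS.contraction {R : Fm → Fm → Prop} (hR : Equivalence R)
    (a : Set Sequent) (ha : InS R a) :
    ∀ (Γ : List Fm) (A B : Fm), (Γ ++ [A, A], B) ∈ a → (Γ ++ [A], B) ∈ a := by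
  intro Γ A B h
  refine ha.ext _ _ _ (fun C => ?_) h
  simp only [List.mem_append, List.mem_cons, List.mem_singleton,
    List.not_mem_nil, or_false]
  tauto
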